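/- Let C be a small category with pullbacks equipped with a Grothendieck pretopology, and let φ : F → G be a map of sheaves of groupoids on C (i.e. presheaves of groupoids whose presheaf of objects and presheaf of morphisms are sheaves of sets). Then φ induces an isomorphism on sheaves of homotopy groups if and only if φ(X) is fully faithful for every X ∈ C and φ satisfies the local lifting condition (L1). -/

import Mathlib

set_option linter.unusedSectionVars false

open CategoryTheory Opposite Limits

universe u

variable {C : Type u} [Category.{u} C] [HasPullbacks C]

section Pi0Aut

variable {F G : Cᵒᵖ ⥤ Grpd.{u, u}}

lemma grpd_map_obj_id (F : Cᵒᵖ ⥤ Grpd.{u, u}) (X : Cᵒᵖ) (a : F.obj X) :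
    (F.map (𝟙 X)).obj a = a := by rw [F.map_id]; rfl

lemma grpd_map_obj_comp (F : Cᵒᵖ ⥤ Grpd.{u, u}) {X Y Z : Cᵒᵖ} (g : X ⟶ Y) (h : Y ⟶ Z)
    (a : F.obj X) : (F.map (g ≫ h)).obj a = (F.map h).obj ((F.map g).obj a) := by
  rw [F.map_comp]; rfl

lemma res_res (F : Cᵒᵖ ⥤ Grpd.{u, u}) {V W T : C} (g : V ⟶ W) (h : W ⟶ T)
    (x : F.obj (op T)) :
    (F.map g.op).obj ((F.map h.op).obj x) = (F.map (g ≫ h).op).obj x := by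
  rw [op_comp, F.map_comp]; rfl

lemma nat_obj_eq (φ : F ⟶ G) {X Y : C} (h : Y ⟶ X) (a : F.obj (op X)) :
    (φ.app (op Y)).obj ((F.map h.op).obj a) = (G.map h.op).obj ((φ.app (op X)).obj a) :=
  congrArg (fun Φ : ↑(F.obj (op X)) ⥤ ↑(G.obj (op Y)) => Φ.obj a) (φ.naturality h.op)

/-- The presheaf `π₀F` of isomorphism classes of a presheaf of groupoids. -/
def pi0 (F : Cᵒᵖ ⥤ Grpd.{u, u}) : Cᵒᵖ ⥤ Type u where
  obj X := Quot (fun a b : F.obj X => Nonempty (a ≅ b))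
  map {X Y} g := TypeCat.ofHom (Quot.map (F.map g).obj
    (fun a b e => e.elim fun e => ⟨(F.map g).mapIso e⟩))
  map_id X := by
    ext q
    obtain ⟨a⟩ := q
    exact congrArg (Quot.mk _) (grpd_map_obj_id F X a)
  map_comp {X Y Z} g h := by
    ext q
    obtain ⟨a⟩ := q
    exact congrArg (Quot.mk _) (grpd_map_obj_comp F g h a)

/-- The map induced on `π₀` by a map of presheaves of groupoids. -/
def pi0Map (φ : F ⟶ G) : pi0 F ⟶ pi0 G where
  app X := TypeCat.ofHom (Quot.map (φ.app X).obj
    (fun a b e => e.elim fun e => ⟨(φ.app X).mapIso e⟩))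
  naturality X Y g := by
    ext q
    obtain ⟨a⟩ := q
    exact congrArg (Quot.mk _)
      (congrArg (fun Φ : ↑(F.obj X) ⥤ ↑(G.obj Y) => Φ.obj a) (φ.naturality g))

lemma aut_eq (F : Cᵒᵖ ⥤ Grpd.{u, u}) {X : C} (a : F.obj (op X)) {g g' : (Over X)ᵒᵖ}
    (h : g ⟶ g') :
    (F.map g'.unop.hom.op).obj a =
      (F.map h.unop.left.op).obj ((F.map g.unop.hom.op).obj a) := by
  rw [res_res, Over.w h.unop]

/-- The presheaf of automorphism groups `Aut_F(a)` on `C/X`, for `a ∈ F(X)` (in a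
groupoid, the endomorphisms of an object are exactly its automorphisms). -/
def autPre (F : Cᵒᵖ ⥤ Grpd.{u, u}) (X : C) (a : F.obj (op X)) : (Over X)ᵒᵖ ⥤ Type u where
  obj g := ((F.map g.unop.hom.op).obj a ⟶ (F.map g.unop.hom.op).obj a)
  map {g g'} h := TypeCat.ofHom fun e =>
    eqToHom (aut_eq F a h) ≫ (F.map h.unop.left.op).map e ≫ eqToHom (aut_eq F a h).symm
  map_id := by
    intro g
    ext e
    change eqToHom _ ≫ (F.map (𝟙 g : g ⟶ g).unop.left.op).map e ≫ eqToHom _ = e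
    have h : (𝟙 g : g ⟶ g).unop.left = 𝟙 g.unop.left := rfl
    have h2 := Functor.congr_hom (show F.map ((𝟙 g : g ⟶ g).unop.left.op) = 𝟙 _ by
      rw [h, op_id, F.map_id]) e
    simp only [h2, eqToHom_trans]
    simp only [show ((𝟙 (F.obj (op g.unop.left)) : _ ⟶ _)).map e = e from rfl]
    simp
  map_comp := by
    intro g g' g'' h h'
    ext e
    change eqToHom _ ≫ (F.map (h ≫ h').unop.left.op).map e ≫ eqToHom _ =
      eqToHom _ ≫ (F.map h'.unop.left.op).map
        (eqToHom _ ≫ (F.map h.unop.left.op).map e ≫ eqToHom _) ≫ eqToHom _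
    have h2 := Functor.congr_hom (show F.map ((h ≫ h').unop.left.op)
        = F.map h.unop.left.op ≫ F.map h'.unop.left.op by
      rw [show (h ≫ h').unop.left = h'.unop.left ≫ h.unop.left from rfl, op_comp,
        F.map_comp]) e
    simp only [types_comp_apply, h2]
    rw [show ∀ {A B : ↑(F.obj (op g.unop.left))} (x : A ⟶ B),
        ((F.map h.unop.left.op ≫ F.map h'.unop.left.op)).map x
        = (F.map h'.unop.left.op).map ((F.map h.unop.left.op).map x) from fun _ => rfl]
    simp [eqToHom_map]

/-- The map induced by `φ : F ⟶ G` on automorphism presheaves. -/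
def autMap (φ : F ⟶ G) (X : C) (a : F.obj (op X)) :
    autPre F X a ⟶ autPre G X ((φ.app (op X)).obj a) where
  app g := TypeCat.ofHom fun e =>
    eqToHom (nat_obj_eq φ g.unop.hom a).symm ≫ (φ.app (op g.unop.left)).map e ≫
      eqToHom (nat_obj_eq φ g.unop.hom a)
  naturality := by
    intro g g' h
    ext e
    have h2 := Functor.congr_hom (φ.naturality h.unop.left.op) e
    change eqToHom _ ≫ (φ.app (op g'.unop.left)).map
        (eqToHom _ ≫ (F.map h.unop.left.op).map e ≫ eqToHom _) ≫ eqToHom _ =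
      eqToHom _ ≫ (G.map h.unop.left.op).map
        (eqToHom _ ≫ (φ.app (op g.unop.left)).map e ≫ eqToHom _) ≫ eqToHom _
    change (φ.app (op g'.unop.left)).map ((F.map h.unop.left.op).map e) =
      eqToHom _ ≫ (G.map h.unop.left.op).map ((φ.app (op g.unop.left)).map e) ≫ eqToHom _ at h2
    try simp only [types_comp_apply, autPre]
    simp [h2, eqToHom_map]

variable (K : Pretopology C)

/-- A map of presheaves of groupoids induces an isomorphism on sheaves of homotopy
groups if the sheafification of `π₀φ` is an isomorphism and, for every `X` and every
object `a` of `F(X)`, the sheafification of `Aut_F(a) ⟶ Aut_G(φ(a))` is an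
isomorphism of sheaves on `C/X`. -/
def InducesIsoOnHomotopySheaves (φ : F ⟶ G) : Prop :=
  IsIso ((presheafToSheaf (K.toGrothendieck) (Type u)).map (pi0Map φ)) ∧
  ∀ (X : C) (a : F.obj (op X)),
    IsIso ((presheafToSheaf ((K.toGrothendieck).over X) (Type u)).map (autMap φ X a))

/-- The local lifting conditions (L1), (L2), (L3) for a map of presheaves of
groupoids. -/
structure LocalLiftingConditions (φ : F ⟶ G) : Prop where
  obj_lift : ∀ (X : C) (b : G.obj (op X)),
    ∃ (ι : Type u) (V : ι → C) (g : ∀ i, V i ⟶ X),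
      Presieve.ofArrows V g ∈ K.coverings X ∧
      ∀ i, ∃ a : F.obj (op (V i)),
        Nonempty ((φ.app (op (V i))).obj a ≅ (G.map (g i).op).obj b)
  hom_lift : ∀ (X : C) (a a' : F.obj (op X))
    (k : (φ.app (op X)).obj a ⟶ (φ.app (op X)).obj a'),
    ∃ (ι : Type u) (V : ι → C) (g : ∀ i, V i ⟶ X),
      Presieve.ofArrows V g ∈ K.coverings X ∧
      ∀ i, ∃ h : (F.map (g i).op).obj a ⟶ (F.map (g i).op).obj a',
        (φ.app (op (V i))).map h =
          eqToHom (nat_obj_eq φ (g i) a) ≫ (G.map (g i).op).map k ≫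
            eqToHom (nat_obj_eq φ (g i) a').symm
  hom_sep : ∀ (X : C) (a : F.obj (op X)) (h : a ⟶ a),
    (φ.app (op X)).map h = 𝟙 ((φ.app (op X)).obj a) →
    ∃ (ι : Type u) (V : ι → C) (g : ∀ i, V i ⟶ X),
      Presieve.ofArrows V g ∈ K.coverings X ∧
      ∀ i, (F.map (g i).op).map h = 𝟙 ((F.map (g i).op).obj a)

end Pi0Aut

section ObMor

variable {F G : Cᵒᵖ ⥤ Grpd.{u, u}}

/-- The presheaf of objects of a presheaf of groupoids. -/
def obPresheaf (F : Cᵒᵖ ⥤ Grpd.{u, u}) : Cᵒᵖ ⥤ Type u where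
  obj X := F.obj X
  map g := TypeCat.ofHom (F.map g).obj
  map_id X := by ext a; exact grpd_map_obj_id F X a
  map_comp g h := by ext a; exact grpd_map_obj_comp F g h a

lemma sigma_hom_ext {A : Type u} [Groupoid.{u} A] {a b a' b' : A} (f : a ⟶ b)
    (g : a' ⟶ b') (ha : a = a') (hb : b = b')
    (hfg : f = eqToHom ha ≫ g ≫ eqToHom hb.symm) :
    (⟨(a, b), f⟩ : Σ ab : A × A, ab.1 ⟶ ab.2) = ⟨(a', b'), g⟩ := by
  subst ha; subst hb; simp at hfg; subst hfg; rfl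

/-- The presheaf of morphisms of a presheaf of groupoids. -/
def morPresheaf (F : Cᵒᵖ ⥤ Grpd.{u, u}) : Cᵒᵖ ⥤ Type u where
  obj X := Σ ab : ↑(F.obj X) × ↑(F.obj X), ab.1 ⟶ ab.2
  map {X Y} g := TypeCat.ofHom fun m => ⟨((F.map g).obj m.1.1, (F.map g).obj m.1.2), (F.map g).map m.2⟩
  map_id X := by
    apply TypeCat.homEquiv.injective
    funext m
    obtain ⟨⟨a, b⟩, f⟩ := m
    exact sigma_hom_ext _ _ (grpd_map_obj_id F X a) (grpd_map_obj_id F X b)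
      (Functor.congr_hom (F.map_id X) f)
  map_comp {X Y Z} g h := by
    apply TypeCat.homEquiv.injective
    funext m
    obtain ⟨⟨a, b⟩, f⟩ := m
    exact sigma_hom_ext _ _ (grpd_map_obj_comp F g h a) (grpd_map_obj_comp F g h b)
      (Functor.congr_hom (F.map_comp g h) f)

/-- The map induced on presheaves of objects. -/
def obMap (φ : F ⟶ G) : obPresheaf F ⟶ obPresheaf G where
  app X := TypeCat.ofHom (φ.app X).obj
  naturality X Y g := by
    ext a
    exact congrArg (fun Φ : ↑(F.obj X) ⥤ ↑(G.obj Y) => Φ.obj a) (φ.naturality g)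

/-- The map induced on presheaves of morphisms. -/
def morMap (φ : F ⟶ G) : morPresheaf F ⟶ morPresheaf G where
  app X := TypeCat.ofHom fun m => ⟨((φ.app X).obj m.1.1, (φ.app X).obj m.1.2), (φ.app X).map m.2⟩
  naturality X Y g := by
    apply TypeCat.homEquiv.injective
    funext m
    obtain ⟨⟨a, b⟩, f⟩ := m
    exact sigma_hom_ext _ _
      (congrArg (fun Φ : ↑(F.obj X) ⥤ ↑(G.obj Y) => Φ.obj a) (φ.naturality g))
      (congrArg (fun Φ : ↑(F.obj X) ⥤ ↑(G.obj Y) => Φ.obj b) (φ.naturality g))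
      (Functor.congr_hom (φ.naturality g) f)

end ObMor

/-- Condition (L1): local lifting of objects. -/
def LocalLiftL1 (K : Pretopology C) {F G : Cᵒᵖ ⥤ Grpd.{u, u}} (φ : F ⟶ G) : Prop :=
  ∀ (X : C) (b : G.obj (op X)),
    ∃ (ι : Type u) (V : ι → C) (g : ∀ i, V i ⟶ X),
      Presieve.ofArrows V g ∈ K.coverings X ∧
      ∀ i, ∃ a : F.obj (op (V i)),
        Nonempty ((φ.app (op (V i))).obj a ≅ (G.map (g i).op).obj b)
section Helpers
variable {C : Type u} [Category.{u} C] [HasPullbacks C] {F G : Cᵒᵖ ⥤ Grpd.{u, u}}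

lemma isoRel_equivalence (F : Cᵒᵖ ⥤ Grpd.{u, u}) (X : Cᵒᵖ) :
    Equivalence (fun a b : F.obj X => Nonempty (a ≅ b)) :=
  ⟨fun a => ⟨Iso.refl a⟩, fun ⟨e⟩ => ⟨e.symm⟩, fun ⟨e⟩ ⟨e'⟩ => ⟨e.trans e'⟩⟩

lemma pi0_mk_eq {X : Cᵒᵖ} {a b : F.obj X} :
    (Quot.mk _ a : (pi0 F).obj X) = Quot.mk _ b ↔ Nonempty (a ≅ b) := by
  rw [Quot.eq]
  exact (isoRel_equivalence F X).eqvGen_iff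

lemma inducesIso_iff_locally (K : Pretopology C) (φ : F ⟶ G) :
    InducesIsoOnHomotopySheaves K φ ↔
      ((Presheaf.IsLocallyInjective (K.toGrothendieck) (pi0Map φ) ∧
        Presheaf.IsLocallySurjective (K.toGrothendieck) (pi0Map φ)) ∧
       ∀ (X : C) (a : F.obj (op X)),
        Presheaf.IsLocallyInjective ((K.toGrothendieck).over X) (autMap φ X a) ∧
        Presheaf.IsLocallySurjective ((K.toGrothendieck).over X) (autMap φ X a)) := by
  unfold InducesIsoOnHomotopySheaves
  rw [← GrothendieckTopology.W_iff, GrothendieckTopology.W_iff_isLocallyBijective]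
  apply and_congr Iff.rfl
  apply forall_congr'; intro X; apply forall_congr'; intro a
  rw [← GrothendieckTopology.W_iff, GrothendieckTopology.W_iff_isLocallyBijective]

end Helpers
section Backward
variable {C : Type u} [Category.{u} C] [HasPullbacks C] {F G : Cᵒᵖ ⥤ Grpd.{u, u}}

lemma pi0Map_injective (φ : F ⟶ G)
    (hff : ∀ X : Cᵒᵖ, (φ.app X : _ ⥤ _).Full ∧ (φ.app X : _ ⥤ _).Faithful) (X : Cᵒᵖ) :
    Function.Injective ((pi0Map φ).app X) := by
  intro q q'
  obtain ⟨a⟩ := q; obtain ⟨a'⟩ := q'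
  intro h
  have h' : (Quot.mk _ ((φ.app X).obj a) : (pi0 G).obj X) =
      Quot.mk _ ((φ.app X).obj a') := h
  obtain ⟨e⟩ := pi0_mk_eq.mp h'
  letI := (hff X).1; letI := (hff X).2
  exact Quot.sound ⟨(φ.app X : _ ⥤ _).preimageIso e⟩

lemma pi0Map_locallySurjective (K : Pretopology C) (φ : F ⟶ G) (hL1 : LocalLiftL1 K φ) :
    Presheaf.IsLocallySurjective (K.toGrothendieck) (pi0Map φ) := by
  constructor
  intro U s
  obtain ⟨b⟩ := s
  obtain ⟨ι, V, g, hcov, hl⟩ := hL1 U b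
  refine ⟨Presieve.ofArrows V g, hcov, ?_⟩
  rintro Y f ⟨i⟩
  obtain ⟨a, ⟨e⟩⟩ := hl i
  exact ⟨Quot.mk _ a, Quot.sound ⟨e⟩⟩

lemma autMap_app_bijective (φ : F ⟶ G)
    (hff : ∀ X : Cᵒᵖ, (φ.app X : _ ⥤ _).Full ∧ (φ.app X : _ ⥤ _).Faithful)
    (X : C) (a : F.obj (op X)) (g : (Over X)ᵒᵖ) :
    Function.Bijective ((autMap φ X a).app g) := by
  letI := (hff (op g.unop.left)).1; letI := (hff (op g.unop.left)).2
  constructor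
  · intro e e' h
    apply (φ.app (op g.unop.left) : _ ⥤ _).map_injective
    have h2 : eqToHom (nat_obj_eq φ g.unop.hom a).symm ≫ (φ.app (op g.unop.left)).map e ≫
        eqToHom (nat_obj_eq φ g.unop.hom a) =
        eqToHom (nat_obj_eq φ g.unop.hom a).symm ≫ (φ.app (op g.unop.left)).map e' ≫
        eqToHom (nat_obj_eq φ g.unop.hom a) := h
    rw [cancel_epi, cancel_mono] at h2
    exact h2
  · intro e'
    refine ⟨(φ.app (op g.unop.left) : _ ⥤ _).preimage
      (eqToHom (nat_obj_eq φ g.unop.hom a) ≫ e' ≫ eqToHom (nat_obj_eq φ g.unop.hom a).symm), ?_⟩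
    show eqToHom _ ≫ (φ.app (op g.unop.left)).map _ ≫ eqToHom _ = e'
    rw [Functor.map_preimage]
    simp
    erw [Category.assoc, eqToHom_trans, eqToHom_refl, Category.comp_id]

lemma autMap_isIso (φ : F ⟶ G)
    (hff : ∀ X : Cᵒᵖ, (φ.app X : _ ⥤ _).Full ∧ (φ.app X : _ ⥤ _).Faithful)
    (X : C) (a : F.obj (op X)) : IsIso (autMap φ X a) := by
  have : ∀ g, IsIso ((autMap φ X a).app g) :=
    fun g => (isIso_iff_bijective _).2 (autMap_app_bijective φ hff X a g)
  apply NatIso.isIso_of_isIso_app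

end Backward
section Forward
variable {C : Type u} [Category.{u} C] [HasPullbacks C] {F G : Cᵒᵖ ⥤ Grpd.{u, u}}

lemma map_map (F : Cᵒᵖ ⥤ Grpd.{u, u}) {V W T : C} (g : V ⟶ W) (h : W ⟶ T)
    {x y : F.obj (op T)} (m : x ⟶ y) :
    (F.map (g ≫ h).op).map m =
      eqToHom (res_res F g h x).symm ≫ (F.map g.op).map ((F.map h.op).map m) ≫
        eqToHom (res_res F g h y) := by
  have h2 := Functor.congr_hom (show F.map ((g ≫ h).op) = F.map h.op ≫ F.map g.op by
    rw [op_comp, F.map_comp]) m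
  rw [show ∀ {A B : ↑(F.obj (op T))} (x : A ⟶ B),
      ((F.map h.op ≫ F.map g.op)).map x = (F.map g.op).map ((F.map h.op).map x) from
      fun _ => rfl] at h2
  exact h2

lemma lift_restrict (φ : F ⟶ G) {X Z Z' : C} (f : Z ⟶ X) (g : Z' ⟶ Z)
    {a a' : F.obj (op X)} {k : (φ.app (op X)).obj a ⟶ (φ.app (op X)).obj a'}
    {h : (F.map f.op).obj a ⟶ (F.map f.op).obj a'}
    (hh : (φ.app (op Z)).map h =
      eqToHom (nat_obj_eq φ f a) ≫ (G.map f.op).map k ≫ eqToHom (nat_obj_eq φ f a').symm) :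
    (φ.app (op Z')).map
        (eqToHom (res_res F g f a).symm ≫ (F.map g.op).map h ≫ eqToHom (res_res F g f a')) =
      eqToHom (nat_obj_eq φ (g ≫ f) a) ≫ (G.map (g ≫ f).op).map k ≫
        eqToHom (nat_obj_eq φ (g ≫ f) a').symm := by
  have hnat := Functor.congr_hom (φ.naturality g.op) h
  rw [show ∀ {A B : ↑(F.obj (op Z))} (x : A ⟶ B),
      ((F.map g.op ≫ φ.app (op Z'))).map x = (φ.app (op Z')).map ((F.map g.op).map x) from
      fun _ => rfl] at hnat
  rw [show ∀ {A B : ↑(F.obj (op Z))} (x : A ⟶ B),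
      ((φ.app (op Z) ≫ G.map g.op)).map x = (G.map g.op).map ((φ.app (op Z)).map x) from
      fun _ => rfl] at hnat
  rw [Functor.map_comp, Functor.map_comp, eqToHom_map, eqToHom_map, hnat, hh,
    Functor.map_comp, Functor.map_comp, eqToHom_map, eqToHom_map, map_map G g f k]
  simp

/-- The sieve of morphisms over which `k` admits a lift. -/
def liftSieve (φ : F ⟶ G) {X : C} (a a' : F.obj (op X))
    (k : (φ.app (op X)).obj a ⟶ (φ.app (op X)).obj a') : Sieve X where
  arrows Z f := ∃ h : (F.map f.op).obj a ⟶ (F.map f.op).obj a',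
    (φ.app (op Z)).map h = eqToHom (nat_obj_eq φ f a) ≫ (G.map f.op).map k ≫
      eqToHom (nat_obj_eq φ f a').symm
  downward_closed := by
    rintro Z Z' f ⟨h, hh⟩ g
    exact ⟨eqToHom (res_res F g f a).symm ≫ (F.map g.op).map h ≫ eqToHom (res_res F g f a'),
      lift_restrict φ f g hh⟩

end Forward
section Faithful
variable {C : Type u} [Category.{u} C] [HasPullbacks C] {F G : Cᵒᵖ ⥤ Grpd.{u, u}}

lemma sigma_hom_inj {A : Type u} [Groupoid.{u} A] {a b : A} {f g : a ⟶ b}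
    (h : (⟨(a, b), f⟩ : Σ ab : A × A, ab.1 ⟶ ab.2) = ⟨(a, b), g⟩) : f = g := by
  simpa using h

lemma faithful_of (K : Pretopology C) (φ : F ⟶ G)
    (hFm : Presieve.IsSheaf (K.toGrothendieck) (morPresheaf F))
    (hinj : ∀ (X : C) (a : F.obj (op X)),
      Presheaf.IsLocallyInjective ((K.toGrothendieck).over X) (autMap φ X a))
    {X0 : C} {a a' : F.obj (op X0)} (h h' : a ⟶ a')
    (heq : (φ.app (op X0)).map h = (φ.app (op X0)).map h') : h = h' := by
  set J := K.toGrothendieck with hJ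
  have hu : (φ.app (op X0)).map (h ≫ inv h') = 𝟙 _ := by
    rw [Functor.map_comp, Functor.map_inv, heq]
    simp
  set u : a ⟶ a := h ≫ inv h' with hudef
  set Y : Over X0 := Over.mk (𝟙 X0) with hYdef
  have p : (F.map Y.hom.op).obj a = a := grpd_map_obj_id F (op X0) a
  set e1 : (autPre F X0 a).obj (op Y) := eqToHom p ≫ u ≫ eqToHom p.symm with he1
  set e2 : (autPre F X0 a).obj (op Y) := 𝟙 _ with he2
  have hG : (φ.app (op X0)).map e1 = (φ.app (op X0)).map e2 := by
    rw [he1, he2, Functor.map_comp, Functor.map_comp, eqToHom_map, eqToHom_map, hu]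
    try simp
  have himg : (autMap φ X0 a).app (op Y) e1 = (autMap φ X0 a).app (op Y) e2 := by
    change eqToHom _ ≫ (φ.app (op X0)).map e1 ≫ eqToHom _ =
      eqToHom _ ≫ (φ.app (op X0)).map e2 ≫ eqToHom _
    rw [hG]
  haveI := hinj X0 a
  have hScov := Presheaf.equalizerSieve_mem (J := J.over X0) (φ := autMap φ X0 a)
    (X := op Y) (x := e1) (y := e2) himg
  have hT : Sieve.overEquiv Y (Presheaf.equalizerSieve (D := Type u) (F := autPre F X0 a) e1 e2) ∈ J X0 := by
    exact (GrothendieckTopology.mem_over_iff (J := J) _).1 hScov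
  have key : ∀ {Z : C} (f : Z ⟶ X0), Sieve.overEquiv Y (Presheaf.equalizerSieve (D := Type u) (F := autPre F X0 a) e1 e2) f →
      (F.map f.op).map h = (F.map f.op).map h' := by
    intro Z f hf
    rw [Sieve.overEquiv_iff] at hf
    set w : Over.mk (f ≫ Y.hom) ⟶ Y := Over.homMk f with hw
    have hf2 : eqToHom (aut_eq F a w.op) ≫ (F.map f.op).map e1 ≫
        eqToHom (aut_eq F a w.op).symm =
        eqToHom (aut_eq F a w.op) ≫ (F.map f.op).map e2 ≫
        eqToHom (aut_eq F a w.op).symm := hf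
    erw [cancel_epi, cancel_mono] at hf2
    rw [he1, he2, Functor.map_comp, Functor.map_comp, eqToHom_map, eqToHom_map,
      CategoryTheory.Functor.map_id] at hf2
    simp only [eqToHom_comp_iff, comp_eqToHom_iff, Category.assoc] at hf2
    have hu2 : (F.map f.op).map u = 𝟙 _ := by
      have key2 : ∀ {A : Type u} [Category.{u} A] {x y : A} (p1 : y = x) (M : x ⟶ x)
          (p2 : x = y), eqToHom p1 ≫ M ≫ eqToHom p2 = 𝟙 y → M = 𝟙 x := by
        intro A _ x y p1 M p2 hh; subst p1; simpa using hh
      exact key2 _ _ _ hf2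
    rw [hudef, Functor.map_comp, Functor.map_inv, IsIso.comp_inv_eq, Category.id_comp] at hu2
    exact hu2
  have hsep := Presieve.IsSheaf.isSeparated hFm _ hT
  apply sigma_hom_inj (a := a) (b := a') (f := h) (g := h')
  refine hsep.ext fun Z f hf => ?_
  exact sigma_hom_ext _ _ rfl rfl (by simpa using key f hf)

end Faithful
section Full
variable {C : Type u} [Category.{u} C] [HasPullbacks C] {F G : Cᵒᵖ ⥤ Grpd.{u, u}}

lemma liftSieve_mem (K : Pretopology C) (φ : F ⟶ G)
    (hinjpi0 : Presheaf.IsLocallyInjective (K.toGrothendieck) (pi0Map φ))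
    (hsurj : ∀ (X : C) (a : F.obj (op X)),
      Presheaf.IsLocallySurjective ((K.toGrothendieck).over X) (autMap φ X a))
    {X0 : C} (a a' : F.obj (op X0))
    (k : (φ.app (op X0)).obj a ⟶ (φ.app (op X0)).obj a') :
    liftSieve φ a a' k ∈ K.toGrothendieck X0 := by
  set J := K.toGrothendieck with hJ
  have hpi : (pi0Map φ).app (op X0) (Quot.mk _ a) = (pi0Map φ).app (op X0) (Quot.mk _ a') :=
    Quot.sound ⟨asIso k⟩
  haveI := hinjpi0
  have hS1 := Presheaf.equalizerSieve_mem (J := J) (φ := pi0Map φ)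
    (X := op X0) (x := Quot.mk _ a) (y := Quot.mk _ a') hpi
  refine J.transitive hS1 _ ?_
  intro Z f hf
  have hf' : (Quot.mk _ ((F.map f.op).obj a) : (pi0 F).obj (op Z)) =
      Quot.mk _ ((F.map f.op).obj a') := hf
  obtain ⟨r⟩ := pi0_mk_eq.mp hf'
  set e' : (autPre G X0 ((φ.app (op X0)).obj a)).obj (op (Over.mk f)) :=
    (G.map f.op).map k ≫ eqToHom (nat_obj_eq φ f a').symm ≫
      (φ.app (op Z)).map r.inv ≫ eqToHom (nat_obj_eq φ f a) with he'
  haveI := hsurj X0 a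
  have hS2 := Presheaf.imageSieve_mem (J := J.over X0) (f := autMap φ X0 a)
    (U := op (Over.mk f)) e'
  refine J.superset_covering ?_ ((GrothendieckTopology.mem_over_iff (J := J) _).1 hS2)
  intro Z' g hg
  rw [Sieve.overEquiv_iff] at hg
  set w : Over.mk (g ≫ (Over.mk f).hom) ⟶ Over.mk f := Over.homMk g with hw
  obtain ⟨s, hs⟩ := hg
  change (F.map (g ≫ f).op).obj a ⟶ (F.map (g ≫ f).op).obj a at s
  refine ⟨s ≫ eqToHom (res_res F g f a).symm ≫ (F.map g.op).map r.hom ≫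
    eqToHom (res_res F g f a'), ?_⟩
  -- extract the value of φ.map s
  have hs2 : eqToHom (nat_obj_eq φ (g ≫ f) a).symm ≫ (φ.app (op Z')).map s ≫
      eqToHom (nat_obj_eq φ (g ≫ f) a) =
      eqToHom (aut_eq G ((φ.app (op X0)).obj a) w.op) ≫ (G.map g.op).map e' ≫
        eqToHom (aut_eq G ((φ.app (op X0)).obj a) w.op).symm := hs
  have hφs : (φ.app (op Z')).map s =
      eqToHom (nat_obj_eq φ (g ≫ f) a) ≫
        (eqToHom (aut_eq G ((φ.app (op X0)).obj a) w.op) ≫ (G.map g.op).map e' ≫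
          eqToHom (aut_eq G ((φ.app (op X0)).obj a) w.op).symm) ≫
        eqToHom (nat_obj_eq φ (g ≫ f) a).symm := by
    rw [← hs2]
    simp
  -- naturality for r.inv
  have hnat1 : (G.map g.op).map ((φ.app (op Z)).map r.inv) =
      eqToHom (nat_obj_eq φ g ((F.map f.op).obj a')).symm ≫
        (φ.app (op Z')).map ((F.map g.op).map r.inv) ≫
        eqToHom (nat_obj_eq φ g ((F.map f.op).obj a)) := by
    have hnat := Functor.congr_hom (φ.naturality g.op) r.inv
    rw [show ∀ {A B : ↑(F.obj (op Z))} (x : A ⟶ B),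
        ((F.map g.op ≫ φ.app (op Z'))).map x = (φ.app (op Z')).map ((F.map g.op).map x) from
        fun _ => rfl] at hnat
    rw [show ∀ {A B : ↑(F.obj (op Z))} (x : A ⟶ B),
        ((φ.app (op Z) ≫ G.map g.op)).map x = (G.map g.op).map ((φ.app (op Z)).map x) from
        fun _ => rfl] at hnat
    rw [hnat]
    simp
  -- composite of restrictions of k
  have hk2 : (G.map g.op).map ((G.map f.op).map k) =
      eqToHom (res_res G g f ((φ.app (op X0)).obj a)) ≫ (G.map (g ≫ f).op).map k ≫
        eqToHom (res_res G g f ((φ.app (op X0)).obj a')).symm := by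
    rw [map_map G g f k]
    simp
  -- inverse cancellation
  have hri : ∀ {T : ↑(G.obj (op Z'))}
      (t : (φ.app (op Z')).obj ((F.map g.op).obj ((F.map f.op).obj a')) ⟶ T),
      (φ.app (op Z')).map ((F.map g.op).map r.inv) ≫
        (φ.app (op Z')).map ((F.map g.op).map r.hom) ≫ t = t := by
    intro T t
    rw [← Category.assoc, ← Functor.map_comp, ← Functor.map_comp, Iso.inv_hom_id,
      CategoryTheory.Functor.map_id, CategoryTheory.Functor.map_id, Category.id_comp]
  erw [(φ.app (op Z')).map_comp, (φ.app (op Z')).map_comp, (φ.app (op Z')).map_comp,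
    eqToHom_map, eqToHom_map, hφs,
    he', (G.map g.op).map_comp, (G.map g.op).map_comp, (G.map g.op).map_comp, eqToHom_map,
    eqToHom_map, hnat1, hk2]
  simp [hri]
  have key3 : ∀ {A : Type u} [Category.{u} A] {p q x1 y1 m n s1 s2 z : A} (h1 : p = q)
      (h2 : q = x1) (K : x1 ⟶ y1) (h3 : y1 = m) (Ri : m ⟶ n) (h4 : n = s1) (h5 : s1 = s2)
      (h6 : s2 = n) (Rh : n ⟶ m) (h7 : m = z) (h8 : p = x1) (h9 : y1 = z),
      (∀ {T : A} (t : m ⟶ T), Ri ≫ Rh ≫ t = t) →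
      eqToHom h1 ≫ ((eqToHom h2 ≫ K ≫ eqToHom h3 ≫ Ri ≫ eqToHom h4) ≫ eqToHom h5) ≫
        eqToHom h6 ≫ Rh ≫ eqToHom h7 = eqToHom h8 ≫ K ≫ eqToHom h9 := by
    intro A _ p q x1 y1 m n s1 s2 z h1 h2 K h3 Ri h4 h5 h6 Rh h7 h8 h9 hR
    have hR' : Ri ≫ Rh = 𝟙 m := by simpa using hR (𝟙 m)
    subst h1 h2 h3 h4 h5 h7
    simp
    rw [hR', Category.comp_id]
  exact key3 _ _ _ _ _ _ _ _ _ _ _ _ hri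

end Full
lemma full_of {C : Type u} [Category.{u} C] [HasPullbacks C] {F G : Cᵒᵖ ⥤ Grpd.{u, u}}
    (K : Pretopology C) (φ : F ⟶ G)
    (hFo : Presieve.IsSheaf (K.toGrothendieck) (obPresheaf F))
    (hFm : Presieve.IsSheaf (K.toGrothendieck) (morPresheaf F))
    (hGm : Presieve.IsSheaf (K.toGrothendieck) (morPresheaf G))
    (hfaith : ∀ (Z : C) {x y : F.obj (op Z)} (m m' : x ⟶ y),
      (φ.app (op Z)).map m = (φ.app (op Z)).map m' → m = m')
    (hinjpi0 : Presheaf.IsLocallyInjective (K.toGrothendieck) (pi0Map φ))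
    (hsurj : ∀ (X : C) (a : F.obj (op X)),
      Presheaf.IsLocallySurjective ((K.toGrothendieck).over X) (autMap φ X a))
    {X0 : C} (a a' : F.obj (op X0))
    (k : (φ.app (op X0)).obj a ⟶ (φ.app (op X0)).obj a') :
    ∃ h : a ⟶ a', (φ.app (op X0)).map h = k := by
  set J := K.toGrothendieck with hJ
  have hT := liftSieve_mem K φ hinjpi0 hsurj a a' k
  set T := liftSieve φ a a' k with hTdef
  set x : Presieve.FamilyOfElements (morPresheaf F) T.arrows :=
    fun Z f hf => ⟨((F.map f.op).obj a, (F.map f.op).obj a'), hf.choose⟩ with hx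
  have hcomp : x.Compatible := by
    rw [Presieve.compatible_iff_sieveCompatible]
    intro Z Z' f g hf
    refine sigma_hom_ext _ _ (res_res F g f a).symm (res_res F g f a').symm ?_
    apply hfaith Z'
    exact ((T.downward_closed hf g).choose_spec).trans (lift_restrict φ f g hf.choose_spec).symm
  obtain ⟨m, hm, -⟩ := hFm T hT x hcomp
  have hc : m.1.1 = a := by
    apply ((Presieve.IsSheaf.isSeparated hFo) T hT).ext
    intro Z f hf
    exact congrArg (fun z => z.1.1) (hm f hf)
  have hc' : m.1.2 = a' := by
    apply ((Presieve.IsSheaf.isSeparated hFo) T hT).ext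
    intro Z f hf
    exact congrArg (fun z => z.1.2) (hm f hf)
  set h0 : a ⟶ a' := eqToHom hc.symm ≫ m.2 ≫ eqToHom hc' with hh0
  refine ⟨h0, ?_⟩
  have hm0 : (⟨(a, a'), h0⟩ :
      Σ ab : ↑(F.obj (op X0)) × ↑(F.obj (op X0)), ab.1 ⟶ ab.2) = m :=
    sigma_hom_ext _ _ hc.symm hc'.symm rfl
  apply sigma_hom_inj (a := (φ.app (op X0)).obj a) (b := (φ.app (op X0)).obj a')
    (f := (φ.app (op X0)).map h0) (g := k)
  apply ((Presieve.IsSheaf.isSeparated hGm) T hT).ext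
  intro Z f hf
  have e1 : (⟨((φ.app (op X0)).obj a, (φ.app (op X0)).obj a'), (φ.app (op X0)).map h0⟩ :
      Σ bb : ↑(G.obj (op X0)) × ↑(G.obj (op X0)), bb.1 ⟶ bb.2) =
      (morMap φ).app (op X0) m := congrArg ((morMap φ).app (op X0)) hm0
  have step : (morPresheaf G).map f.op ((morMap φ).app (op X0) m) =
      (morMap φ).app (op Z) ((morPresheaf F).map f.op m) :=
    (ConcreteCategory.congr_hom ((morMap φ).naturality f.op) m).symm
  rw [e1, step, hm f hf]
  exact sigma_hom_ext _ _ (nat_obj_eq φ f a) (nat_obj_eq φ f a') hf.choose_spec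
lemma l1_of {C : Type u} [Category.{u} C] [HasPullbacks C] {F G : Cᵒᵖ ⥤ Grpd.{u, u}}
    (K : Pretopology C) (φ : F ⟶ G)
    (hsurjpi0 : Presheaf.IsLocallySurjective (K.toGrothendieck) (pi0Map φ)) :
    LocalLiftL1 K φ := by
  intro X b
  haveI := hsurjpi0
  have hmem := Presheaf.imageSieve_mem (J := K.toGrothendieck) (f := pi0Map φ)
    (U := op X) (Quot.mk _ b)
  obtain ⟨R, hR, hle⟩ := hmem
  refine ⟨Σ Z : C, {f : Z ⟶ X // R f}, fun i => i.1, fun i => i.2.1, ?_, ?_⟩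
  · have hO : Presieve.ofArrows (fun i : (Σ Z : C, {f : Z ⟶ X // R f}) => i.1)
        (fun i => i.2.1) = R := by
      funext Z
      ext f
      constructor
      · rintro ⟨i⟩
        exact i.2.2
      · intro hf
        exact Presieve.ofArrows.mk (⟨Z, f, hf⟩ : Σ Z : C, {f : Z ⟶ X // R f})
    rw [hO]
    exact hR
  · intro i
    obtain ⟨t, ht⟩ := hle i.1 i.2.1 i.2.2
    induction t using Quot.ind with
    | _ a0 =>
      exact ⟨a0, pi0_mk_eq.mp (show (Quot.mk _ ((φ.app (op i.1)).obj a0) :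
        (pi0 G).obj (op i.1)) = Quot.mk _ ((G.map i.2.1.op).obj b) from ht)⟩


/-- A map of sheaves of groupoids (presheaves of groupoids whose presheaves of
objects and morphisms are sheaves) induces an isomorphism on sheaves of homotopy
groups if and only if it is objectwise fully faithful and satisfies the local
lifting condition (L1). -/
theorem sheaves_inducesIso_iff (K : Pretopology C) {F G : Cᵒᵖ ⥤ Grpd.{u, u}}
    (φ : F ⟶ G)
    (hFo : Presieve.IsSheaf (K.toGrothendieck) (obPresheaf F))
    (hFm : Presieve.IsSheaf (K.toGrothendieck) (morPresheaf F))
    (hGo : Presieve.IsSheaf (K.toGrothendieck) (obPresheaf G))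
    (hGm : Presieve.IsSheaf (K.toGrothendieck) (morPresheaf G)) :
    InducesIsoOnHomotopySheaves K φ ↔
      ((∀ X : Cᵒᵖ, (φ.app X : _ ⥤ _).Full ∧ (φ.app X : _ ⥤ _).Faithful) ∧
        LocalLiftL1 K φ) := by
  rw [inducesIso_iff_locally]
  constructor
  · rintro ⟨⟨hpinj, hpsurj⟩, haut⟩
    have hinj : ∀ (X : C) (a : F.obj (op X)),
        Presheaf.IsLocallyInjective ((K.toGrothendieck).over X) (autMap φ X a) :=
      fun X a => (haut X a).1
    have hsurjA : ∀ (X : C) (a : F.obj (op X)),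
        Presheaf.IsLocallySurjective ((K.toGrothendieck).over X) (autMap φ X a) :=
      fun X a => (haut X a).2
    have hfaith : ∀ (Z : C) {x y : F.obj (op Z)} (m m' : x ⟶ y),
        (φ.app (op Z)).map m = (φ.app (op Z)).map m' → m = m' :=
      fun Z _ _ m m' h => faithful_of K φ hFm hinj m m' h
    refine ⟨fun X => ⟨?_, ?_⟩, l1_of K φ hpsurj⟩
    · exact ⟨fun {A A'} k =>
        full_of K φ hFo hFm hGm hfaith hpinj hsurjA (X0 := X.unop) A A' k⟩
    · exact ⟨fun {A A'} {m m'} h => hfaith X.unop m m' h⟩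
  · rintro ⟨hff, hL1⟩
    refine ⟨⟨Presheaf.isLocallyInjective_of_injective _ _ (pi0Map_injective φ hff),
      pi0Map_locallySurjective K φ hL1⟩, fun X a => ?_⟩
    haveI := autMap_isIso φ hff X a
    exact ⟨inferInstance, inferInstance⟩
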